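/- Let A be an m-dimensional binary array of size n_1 × ⋯ × n_m with periodic extension 𝔸. If A has a repeated toroidal vector (h_1,...,h_m) such that h_i ≠ n_i/2 for every i, then there exists an n_1 × ⋯ × n_m window of 𝔸 containing four dots α_1', ω_1', α_2', ω_2' with (α_1', ω_1') ≠ (α_2', ω_2') and ω_1' - α_1' = ω_2' - α_2' (a repeated difference vector). -/
import Mathlib

/-- `α` is a dot of the periodic extension of the binary array with dot set `D`
(indexed in the box `∏ [0, n i)`). -/
def IsExtDot (m : ℕ) (n : Fin m → ℕ) (D : Finset (Fin m → ℤ)) (α : Fin m → ℤ) : Prop :=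
  ∃ d ∈ D, ∀ i, (α i : ZMod (n i)) = (d i : ZMod (n i))

/-- `α` lies in the `n 1 × ⋯ × n m` window based at `κ`. -/
def InWindow (m : ℕ) (n : Fin m → ℕ) (κ α : Fin m → ℤ) : Prop :=
  ∀ i, κ i ≤ α i ∧ α i < κ i + (n i : ℤ)

lemma eq_of_cast_eq (nn : ℕ) (x y : ℤ) (hx0 : 0 ≤ x) (hx1 : x < (nn : ℤ))
    (hy0 : 0 ≤ y) (hy1 : y < (nn : ℤ)) (hxy : (x : ZMod nn) = (y : ZMod nn)) : x = y := by
  have h := (ZMod.intCast_eq_intCast_iff' x y nn).mp hxy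
  rwa [Int.emod_eq_of_lt hx0 hx1, Int.emod_eq_of_lt hy0 hy1] at h

theorem repeated_toroidal_implies_repeated_difference
    (m : ℕ) (n : Fin m → ℕ) (hn : ∀ i, 2 ≤ n i)
    (D : Finset (Fin m → ℤ)) (hD : ∀ d ∈ D, ∀ i, 0 ≤ d i ∧ d i < (n i : ℤ))
    (h : Fin m → ℤ) (hh : ∀ i, 0 ≤ h i ∧ h i < (n i : ℤ) ∧ 2 * h i ≠ (n i : ℤ))
    (α₁ ω₁ α₂ ω₂ : Fin m → ℤ)
    (hα₁ : α₁ ∈ D) (hω₁ : ω₁ ∈ D) (hα₂ : α₂ ∈ D) (hω₂ : ω₂ ∈ D)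
    (h₁ : α₁ ≠ ω₁) (h₂ : α₂ ≠ ω₂) (hpairs : (α₁, ω₁) ≠ (α₂, ω₂))
    (ht₁ : ∀ i, ((ω₁ i - α₁ i : ℤ) : ZMod (n i)) = ((h i : ℤ) : ZMod (n i)))
    (ht₂ : ∀ i, ((ω₂ i - α₂ i : ℤ) : ZMod (n i)) = ((h i : ℤ) : ZMod (n i))) :
    ∃ κ α₁' ω₁' α₂' ω₂' : Fin m → ℤ,
      InWindow m n κ α₁' ∧ InWindow m n κ ω₁' ∧ InWindow m n κ α₂' ∧ InWindow m n κ ω₂' ∧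
      IsExtDot m n D α₁' ∧ IsExtDot m n D ω₁' ∧ IsExtDot m n D α₂' ∧ IsExtDot m n D ω₂' ∧
      α₁' ≠ ω₁' ∧ α₂' ≠ ω₂' ∧ (α₁', ω₁') ≠ (α₂', ω₂') ∧
      ω₁' - α₁' = ω₂' - α₂' := by
  classical
  have hN2 : ∀ i, (2 : ℤ) ≤ (n i : ℤ) := fun i => by exact_mod_cast hn i
  set δ : Fin m → ℤ := fun i => if 2 * h i < (n i : ℤ) then h i else h i - (n i : ℤ)
    with hδdef
  have hδb : ∀ i, -((n i : ℤ)) < 2 * δ i ∧ 2 * δ i < (n i : ℤ) := by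
    intro i
    obtain ⟨h0, h1, h2⟩ := hh i
    simp only [hδdef]
    split_ifs with hc <;> constructor <;> omega
  have hδmod : ∀ i, ((δ i : ℤ) : ZMod (n i)) = ((h i : ℤ) : ZMod (n i)) := by
    intro i
    simp only [hδdef]
    split_ifs with hc
    · rfl
    · push_cast
      simp
  set r : Fin m → ℤ := fun i => (α₂ i - α₁ i + (n i : ℤ) / 2) % (n i : ℤ) with hrdef
  have hrb : ∀ i, 0 ≤ r i ∧ r i < (n i : ℤ) := fun i =>
    ⟨Int.emod_nonneg _ (by have := hN2 i; omega),
     Int.emod_lt_of_pos _ (by have := hN2 i; omega)⟩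
  set b : Fin m → ℤ := fun i => α₁ i + r i - (n i : ℤ) / 2 with hbdef
  have hrmod : ∀ i, ((r i : ℤ) : ZMod (n i)) =
      ((α₂ i - α₁ i + (n i : ℤ) / 2 : ℤ) : ZMod (n i)) := by
    intro i
    simp only [hrdef]
    exact ZMod.intCast_mod _ _
  have hbmod : ∀ i, ((b i : ℤ) : ZMod (n i)) = ((α₂ i : ℤ) : ZMod (n i)) := by
    intro i
    have hr := hrmod i
    simp only [hbdef]
    push_cast at hr ⊢
    linear_combination hr
  have hω1mod : ∀ i, ((α₁ i + δ i : ℤ) : ZMod (n i)) = ((ω₁ i : ℤ) : ZMod (n i)) := by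
    intro i
    have e1 := ht₁ i
    have e2 := hδmod i
    push_cast at e1 e2 ⊢
    linear_combination e2 - e1
  have hω2mod : ∀ i, ((b i + δ i : ℤ) : ZMod (n i)) = ((ω₂ i : ℤ) : ZMod (n i)) := by
    intro i
    have e1 := ht₂ i
    have e2 := hδmod i
    have e3 := hbmod i
    push_cast at e1 e2 e3 ⊢
    linear_combination e3 + e2 - e1
  have hne : α₁ ≠ α₂ := by
    intro hq
    apply hpairs
    have hω : ω₁ = ω₂ := by
      funext i
      have e1 := ht₁ i
      have e2 := ht₂ i
      have hq' : α₁ i = α₂ i := congrFun hq i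
      refine eq_of_cast_eq (n i) _ _ (hD ω₁ hω₁ i).1 (hD ω₁ hω₁ i).2
        (hD ω₂ hω₂ i).1 (hD ω₂ hω₂ i).2 ?_
      push_cast at e1 e2 ⊢
      rw [hq'] at e1
      linear_combination e1 - e2
    rw [hq, hω]
  have hδne : ∃ i, δ i ≠ 0 := by
    by_contra hall
    push_neg at hall
    apply h₁
    funext i
    have hhi : h i = 0 := by
      have := hall i
      obtain ⟨h0, h1', h2'⟩ := hh i
      simp only [hδdef] at this
      split_ifs at this <;> omega
    have e1 := ht₁ i
    refine eq_of_cast_eq (n i) _ _ (hD α₁ hα₁ i).1 (hD α₁ hα₁ i).2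
      (hD ω₁ hω₁ i).1 (hD ω₁ hω₁ i).2 ?_
    rw [hhi] at e1
    push_cast at e1 ⊢
    linear_combination -e1
  obtain ⟨i₀, hi₀⟩ := hδne
  have hwin : ∀ i, ∀ p : ℤ, (p = α₁ i ∨ p = α₁ i + δ i ∨ p = b i ∨ p = b i + δ i) →
      min (α₁ i) (b i) + min (δ i) 0 ≤ p ∧
        p < min (α₁ i) (b i) + min (δ i) 0 + (n i : ℤ) := by
    intro i p hp
    have hd := hδb i
    have hr := hrb i
    have hN := hN2 i
    have hb : b i = α₁ i + r i - (n i : ℤ) / 2 := rfl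
    rcases le_total (α₁ i) (b i) with hab | hab <;>
      rcases le_total (δ i) 0 with hdz | hdz <;>
      simp only [min_eq_left hab, min_eq_right hab, min_eq_left hdz, min_eq_right hdz,
        min_eq_left (le_refl (α₁ i))] <;>
      rcases hp with hp | hp | hp | hp <;> subst hp <;> constructor <;> omega
  refine ⟨fun i => min (α₁ i) (b i) + min (δ i) 0, α₁, fun i => α₁ i + δ i, b,
    fun i => b i + δ i,
    fun i => hwin i _ (Or.inl rfl),
    fun i => hwin i _ (Or.inr (Or.inl rfl)),
    fun i => hwin i _ (Or.inr (Or.inr (Or.inl rfl))),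
    fun i => hwin i _ (Or.inr (Or.inr (Or.inr rfl))),
    ⟨α₁, hα₁, fun i => rfl⟩, ⟨ω₁, hω₁, fun i => hω1mod i⟩,
    ⟨α₂, hα₂, fun i => hbmod i⟩, ⟨ω₂, hω₂, fun i => hω2mod i⟩,
    ?_, ?_, ?_, ?_⟩
  · intro hq
    have h' : α₁ i₀ = α₁ i₀ + δ i₀ := congrFun hq i₀
    omega
  · intro hq
    have h' : b i₀ = b i₀ + δ i₀ := congrFun hq i₀
    omega
  · intro hq
    have hfst : α₁ = b := congrArg Prod.fst hq
    apply hne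
    funext i
    have hb' := hbmod i
    rw [← congrFun hfst i] at hb'
    exact eq_of_cast_eq (n i) _ _ (hD α₁ hα₁ i).1 (hD α₁ hα₁ i).2
      (hD α₂ hα₂ i).1 (hD α₂ hα₂ i).2 hb'
  · funext i
    simp only [Pi.sub_apply]
    ring
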